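/- For every f ∈ B, if the principal ideal (f) is σ-invariant, i.e. the image of the ideal generated by f under σ equals the ideal generated by f, then f = 0 or f is a unit of B. (In other words, B has no nonzero proper principal σ-invariant ideals.) -/

import Mathlib

/-- The group automorphism of `ℤ × ℤ` sending `(m, n)` to `(5m + n, 4m + n)`. -/
noncomputable def Mzz : (ℤ × ℤ) ≃+ (ℤ × ℤ) where
  toFun v := (5 * v.1 + v.2, 4 * v.1 + v.2)
  invFun v := (v.1 - v.2, -4 * v.1 + 5 * v.2)
  left_inv := by rintro ⟨m, n⟩; simp only [Prod.mk.injEq]; constructor <;> ring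
  right_inv := by rintro ⟨m, n⟩; simp only [Prod.mk.injEq]; constructor <;> ring
  map_add' := by
    rintro ⟨m, n⟩ ⟨m', n'⟩
    simp only [Prod.mk_add_mk, Prod.mk.injEq]
    constructor <;> ring

open Finsupp in
lemma uniqueAdd_max {G : Type*} [AddCommGroup G] [LinearOrder G] [IsOrderedAddMonoid G] {A B : Finset G}
    (hA : A.Nonempty) (hB : B.Nonempty) : UniqueAdd A B (A.max' hA) (B.max' hB) := by
  intro a b ha hb hab
  have h1 := A.le_max' a ha
  have h2 := B.le_max' b hb
  constructor
  · by_contra hne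
    exact absurd hab (ne_of_lt (add_lt_add_of_lt_of_le (h1.lt_of_ne hne) h2))
  · by_contra hne
    exact absurd hab (ne_of_lt (add_lt_add_of_le_of_lt h1 (h2.lt_of_ne hne)))

lemma uniqueAdd_min {G : Type*} [AddCommGroup G] [LinearOrder G] [IsOrderedAddMonoid G] {A B : Finset G}
    (hA : A.Nonempty) (hB : B.Nonempty) : UniqueAdd A B (A.min' hA) (B.min' hB) := by
  intro a b ha hb hab
  have h1 := A.min'_le a ha
  have h2 := B.min'_le b hb
  constructor
  · by_contra hne
    exact absurd hab (ne_of_gt (add_lt_add_of_lt_of_le ((h1.lt_of_ne (Ne.symm hne))) h2))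
  · by_contra hne
    exact absurd hab (ne_of_gt (add_lt_add_of_le_of_lt h1 (h2.lt_of_ne (Ne.symm hne))))

lemma unit_supp {k G : Type*} [Field k] [AddCommGroup G] [LinearOrder G] [IsOrderedAddMonoid G]
    {u v : AddMonoidAlgebra k G} (h : u * v = 1) : u.coeff.support.card = 1 := by
  have hu : u ≠ 0 := by rintro rfl; simp at h
  have hv : v ≠ 0 := by rintro rfl; simp at h
  have hA : u.coeff.support.Nonempty :=
    Finsupp.support_nonempty_iff.mpr (AddMonoidAlgebra.coeff_eq_zero.not.mpr hu)
  have hB : v.coeff.support.Nonempty :=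
    Finsupp.support_nonempty_iff.mpr (AddMonoidAlgebra.coeff_eq_zero.not.mpr hv)
  have key : ∀ a b : G, a ∈ u.coeff.support → b ∈ v.coeff.support →
      UniqueAdd u.coeff.support v.coeff.support a b →
      a + b = 0 := by
    intro a b ha hb huniq
    have h1 : (u * v).coeff (a + b) ≠ 0 := by
      rw [AddMonoidAlgebra.coeff_mul_add_of_uniqueAdd huniq]
      exact mul_ne_zero (Finsupp.mem_support_iff.mp ha) (Finsupp.mem_support_iff.mp hb)
    rw [h] at h1
    by_contra hne
    exact h1 (by simp [AddMonoidAlgebra.one_def, Finsupp.single_apply, hne, Ne.symm hne])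
  have hmax := key _ _ (u.coeff.support.max'_mem hA) (v.coeff.support.max'_mem hB) (uniqueAdd_max hA hB)
  have hmin := key _ _ (u.coeff.support.min'_mem hA) (v.coeff.support.min'_mem hB) (uniqueAdd_min hA hB)
  have heq : u.coeff.support.max' hA = u.coeff.support.min' hA := by
    have e1 : u.coeff.support.max' hA = -(v.coeff.support.max' hB) := eq_neg_of_add_eq_zero_left hmax
    have e2 : u.coeff.support.min' hA = -(v.coeff.support.min' hB) := eq_neg_of_add_eq_zero_left hmin
    have l2 : v.coeff.support.min' hB ≤ v.coeff.support.max' hB :=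
      Finset.min'_le _ _ (v.coeff.support.max'_mem hB)
    have : u.coeff.support.max' hA ≤ u.coeff.support.min' hA := by rw [e1, e2]; exact neg_le_neg l2
    exact le_antisymm this (Finset.min'_le _ _ (u.coeff.support.max'_mem hA))
  rw [Finset.card_eq_one]
  refine ⟨u.coeff.support.max' hA, Finset.eq_singleton_iff_unique_mem.mpr
    ⟨u.coeff.support.max'_mem hA, fun x hx => le_antisymm (Finset.le_max' _ _ hx) ?_⟩⟩
  rw [heq]; exact Finset.min'_le _ _ hx

noncomputable def eLex : (ℤ × ℤ) ≃+ (ℤ ×ₗ ℤ) :=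
  { toLex with map_add' := fun _ _ => rfl }

noncomputable def Amat : Matrix (Fin 2) (Fin 2) ℤ := !![5, 1; 4, 1]

lemma Amat_sq : Amat * Amat = (6 : ℤ) • Amat - 1 := by
  ext i j
  fin_cases i <;> fin_cases j <;>
    simp [Amat, Matrix.mul_apply, Fin.sum_univ_two, Matrix.one_apply, Matrix.smul_apply,
      smul_eq_mul, Matrix.sub_apply]

lemma Amat_det : Amat.det = 1 := by
  simp [Amat, Matrix.det_fin_two_of]

lemma trace_rec (n : ℕ) :
    (Amat ^ (n + 2)).trace = 6 * (Amat ^ (n + 1)).trace - (Amat ^ n).trace := by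
  have h1 : Amat ^ (n + 2) = Amat ^ n * (Amat * Amat) := by rw [pow_add, pow_two]
  rw [h1, Amat_sq, mul_sub, mul_one, Matrix.mul_smul, ← pow_succ, Matrix.trace_sub,
    Matrix.trace_smul]
  simp [smul_eq_mul]

lemma trace_lb : ∀ n : ℕ, 2 ≤ (Amat ^ n).trace ∧ (Amat ^ n).trace < (Amat ^ (n + 1)).trace := by
  intro n
  induction n with
  | zero =>
    constructor
    · simp [Matrix.trace_one]
    · simp only [pow_zero, pow_one, Matrix.trace_one]
      simp [Amat, Matrix.trace_fin_two_of]
  | succ m ih =>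
    obtain ⟨h1, h2⟩ := ih
    refine ⟨by omega, ?_⟩
    have h3 := trace_rec m
    have h4 : (Amat ^ (m + 1 + 1)).trace = (Amat ^ (m + 2)).trace := by norm_num
    omega

lemma no_periodic (n : ℕ) (hn : n ≠ 0) (d : ℤ × ℤ) (hd : (⇑Mzz)^[n] d = d) : d = 0 := by
  obtain ⟨m, rfl⟩ := Nat.exists_eq_succ_of_ne_zero hn
  have vec : ∀ v : ℤ × ℤ, Amat.mulVec ![v.1, v.2] = ![(Mzz v).1, (Mzz v).2] := by
    intro v
    funext i
    fin_cases i <;>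
      simp [Amat, Matrix.mulVec, dotProduct, Fin.sum_univ_two, Mzz]
  have iter : ∀ m : ℕ, (Amat ^ m).mulVec ![d.1, d.2] =
      ![((⇑Mzz)^[m] d).1, ((⇑Mzz)^[m] d).2] := by
    intro m
    induction m with
    | zero => simp
    | succ j ihj =>
      rw [Function.iterate_succ_apply', ← vec _, pow_succ', ← Matrix.mulVec_mulVec, ihj]
  have hfix : (Amat ^ (m + 1)).mulVec ![d.1, d.2] = ![d.1, d.2] := by rw [iter, hd]
  set X := Amat ^ (m + 1) with hX
  have hB : (X - 1).mulVec ![d.1, d.2] = 0 := by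
    rw [Matrix.sub_mulVec, hfix, Matrix.one_mulVec, sub_self]
  have e0 := congrFun hB 0
  have e1 := congrFun hB 1
  simp only [Matrix.mulVec, dotProduct, Fin.sum_univ_two, Pi.zero_apply,
    Matrix.cons_val_zero, Matrix.cons_val_one, Matrix.head_cons] at e0 e1
  by_contra hd0
  have key1 : (X - 1).det * d.1 = 0 := by
    rw [Matrix.det_fin_two]
    linear_combination (X - 1) 1 1 * e0 - (X - 1) 0 1 * e1
  have key2 : (X - 1).det * d.2 = 0 := by
    rw [Matrix.det_fin_two]
    linear_combination (X - 1) 0 0 * e1 - (X - 1) 1 0 * e0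
  have hdet : (X - 1).det = 0 := by
    have hc : d.1 ≠ 0 ∨ d.2 ≠ 0 := by
      by_contra hcc; push_neg at hcc
      exact hd0 (Prod.ext hcc.1 hcc.2)
    rcases hc with hc | hc
    · exact (mul_eq_zero.mp key1).resolve_right hc
    · exact (mul_eq_zero.mp key2).resolve_right hc
  have expand : (X - 1).det = X.det - X.trace + 1 := by
    rw [Matrix.det_fin_two, Matrix.det_fin_two, Matrix.trace_fin_two]
    simp only [Matrix.sub_apply, Matrix.one_apply_eq, Matrix.one_apply_ne (by decide : (0 : Fin 2) ≠ 1),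
      Matrix.one_apply_ne (by decide : (1 : Fin 2) ≠ 0)]
    ring
  have hXdet : X.det = 1 := by rw [hX, Matrix.det_pow, Amat_det, one_pow]
  have htr : X.trace = 2 := by omega
  rw [hX] at htr
  have h1 := (trace_lb m).1
  have h2 := (trace_lb m).2
  omega

/-- The `k`-algebra automorphism `σ` of `B = k[x^{±1}, y^{±1}]` with
`σ(x) = x^5 y^4`, `σ(y) = x y`, induced by `Mzz`. -/
noncomputable def σB (k : Type*) [Field k] :
    AddMonoidAlgebra k (ℤ × ℤ) ≃ₐ[k] AddMonoidAlgebra k (ℤ × ℤ) :=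
  AddMonoidAlgebra.domCongr k k Mzz

/-- `B` has no nonzero proper principal `σ`-invariant ideals: if the principal ideal `(f)`
is `σ`-invariant then `f = 0` or `f` is a unit. -/
theorem stmt0 (k : Type*) [Field k] (f : AddMonoidAlgebra k (ℤ × ℤ))
    (h : Ideal.map (σB k) (Ideal.span {f}) = Ideal.span {f}) :
    f = 0 ∨ IsUnit f := by
  by_cases hf : f = 0
  · exact Or.inl hf
  right
  haveI : IsDomain (AddMonoidAlgebra k (ℤ × ℤ)) := NoZeroDivisors.to_isDomain _
  have hspan : Ideal.span {(σB k) f} = Ideal.span {f} := by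
    rw [← h, Ideal.map_span, Set.image_singleton]
  obtain ⟨w, hw⟩ := (Ideal.span_singleton_eq_span_singleton.mp hspan).symm
  -- hw : f * ↑w = σB k f
  have hw1 : (w : AddMonoidAlgebra k (ℤ × ℤ)) * ((w⁻¹ : _ˣ) : AddMonoidAlgebra k (ℤ × ℤ)) = 1 :=
    w.mul_inv
  have hψ : ((AddMonoidAlgebra.domCongr k k eLex) (w : AddMonoidAlgebra k (ℤ × ℤ))) *
      ((AddMonoidAlgebra.domCongr k k eLex) ((w⁻¹ : _ˣ) : AddMonoidAlgebra k (ℤ × ℤ))) = 1 := by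
    rw [← map_mul, hw1, map_one]
  have hcard : (w : AddMonoidAlgebra k (ℤ × ℤ)).coeff.support.card = 1 := by
    have := unit_supp hψ
    rwa [AddMonoidAlgebra.domCongr_support, Finset.card_map] at this
  obtain ⟨g, hg⟩ := Finset.card_eq_one.mp hcard
  obtain ⟨hc, hwg⟩ := Finsupp.support_eq_singleton.mp hg
  set c : k := (w : AddMonoidAlgebra k (ℤ × ℤ)).coeff g with hcdef
  -- support of σ f two ways
  have hsup1 : ((σB k) f).coeff.support = f.coeff.support.map (Mzz : (ℤ × ℤ) ≃+ (ℤ × ℤ)) := by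
    exact AddMonoidAlgebra.domCongr_support Mzz f
  have hsup2 : ((σB k) f).coeff.support = f.coeff.support.map (addRightEmbedding g) := by
    rw [← hw, show (w : AddMonoidAlgebra k (ℤ × ℤ)) = AddMonoidAlgebra.single g c from
      AddMonoidAlgebra.coeff_injective hwg]
    exact AddMonoidAlgebra.support_coeff_mul_single f c
      (fun y => by
        constructor
        · intro hy; exact (mul_eq_zero.mp hy).resolve_right hc
        · rintro rfl; rw [zero_mul]) g
  set S := f.coeff.support with hS
  have hSne : S.Nonempty :=
    Finsupp.support_nonempty_iff.mpr (AddMonoidAlgebra.coeff_eq_zero.not.mpr hf)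
  have hinv : ∀ s ∈ S, ∃ s' ∈ S, Mzz s = s' + g := by
    intro s hs
    have h1 : Mzz s ∈ ((σB k) f).coeff.support := by
      rw [hsup1, Finset.mem_map]
      exact ⟨s, hs, rfl⟩
    rw [hsup2, Finset.mem_map] at h1
    obtain ⟨s', hs', hss'⟩ := h1
    exact ⟨s', hs', by rw [← hss']; rfl⟩
  set D : Finset (ℤ × ℤ) := (S ×ˢ S).image (fun p => p.1 - p.2) with hD
  have hmemD : ∀ a ∈ S, ∀ b ∈ S, a - b ∈ D := by
    intro a ha b hb
    rw [hD, Finset.mem_image]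
    exact ⟨(a, b), Finset.mem_product.mpr ⟨ha, hb⟩, rfl⟩
  have hmaps : ∀ d ∈ D, Mzz d ∈ D := by
    intro d hd
    rw [hD, Finset.mem_image] at hd
    obtain ⟨p, hp, hpd⟩ := hd
    obtain ⟨hp1, hp2⟩ := Finset.mem_product.mp hp
    obtain ⟨s', hs', h1⟩ := hinv p.1 hp1
    obtain ⟨t', ht', h2⟩ := hinv p.2 hp2
    have : Mzz d = s' - t' := by
      rw [← hpd, map_sub, h1, h2]; abel
    rw [this]
    exact hmemD s' hs' t' ht'
  have hiter : ∀ n : ℕ, ∀ d ∈ D, (⇑Mzz)^[n] d ∈ D := by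
    intro n
    induction n with
    | zero => intro d hd; simpa using hd
    | succ m ih =>
      intro d hd
      rw [Function.iterate_succ_apply']
      exact hmaps _ (ih d hd)
  have hdiff : ∀ a ∈ S, ∀ b ∈ S, a = b := by
    intro a ha b hb
    have hd : a - b ∈ D := hmemD a ha b hb
    obtain ⟨i, -, j, -, hij, heq⟩ :=
      Finset.exists_ne_map_eq_of_card_lt_of_maps_to
        (s := Finset.range (D.card + 1)) (t := D)
        (by simp) (fun i _ => hiter i (a - b) hd)
    have key : ∀ i j : ℕ, i < j → (⇑Mzz)^[i] (a - b) = (⇑Mzz)^[j] (a - b) → a = b := by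
      intro i j hij' heq'
      have h1 : (⇑Mzz)^[i] ((⇑Mzz)^[j - i] (a - b)) = (⇑Mzz)^[i] (a - b) := by
        rw [← Function.iterate_add_apply, show i + (j - i) = j by omega]
        exact heq'.symm
      have h2 := (Mzz.injective.iterate i) h1
      have := no_periodic (j - i) (by omega) (a - b) h2
      exact sub_eq_zero.mp this
    rcases hij.lt_or_gt with hlt | hlt
    · exact key i j hlt heq
    · exact key j i hlt heq.symm
  obtain ⟨a, ha⟩ := hSne
  have hSsing : S = {a} := Finset.eq_singleton_iff_unique_mem.mpr
    ⟨ha, fun x hx => hdiff x hx a ha⟩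
  obtain ⟨hfa, hfeq⟩ := Finsupp.support_eq_singleton.mp hSsing
  refine IsUnit.of_mul_eq_one (a := f) (AddMonoidAlgebra.single (-a) (f.coeff a)⁻¹) ?_
  nth_rewrite 1 [show f = AddMonoidAlgebra.single a (f.coeff a) from
    AddMonoidAlgebra.coeff_injective hfeq]
  rw [AddMonoidAlgebra.single_mul_single, add_neg_cancel, mul_inv_cancel₀ hfa,
    ← AddMonoidAlgebra.one_def]
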